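/- For p ∈ [0,1], let ϱ_red be the 4×4 matrix (in the ordered basis |00⟩,|01⟩,|10⟩,|11⟩) with diagonal entries (2+p)/6, (1−p)/3, (1−p)/3, p/2, with entries (1−p)/3 in positions (|01⟩,|10⟩) and (|10⟩,|01⟩), and all other entries zero (this is the two-qubit marginal, obtained by tracing out any one qubit, of the three-qubit state p|GHZ⟩⟨GHZ| + (1−p)|W⟩⟨W| with |GHZ⟩ = (|000⟩+|111⟩)/√2 and |W⟩ = (|001⟩+|010⟩+|100⟩)/√3). Then the eigenvalues of ϱ_red are 0, (2/3)(1−p), p/2, and (2+p)/6, and ϱ_red ∈ 𝔄𝔉₂ if and only if p ∈ [1/4, 1]. -/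

import Mathlib

open Matrix Kronecker Complex
open scoped ComplexOrder

/-- The canonical maximally entangled vector `|ψ⁺⟩ = (1/√d) ∑ᵢ |ii⟩` on `ℂ^d ⊗ ℂ^d`. -/
noncomputable def psiPlus (d : ℕ) : (Fin d × Fin d) → ℂ :=
  fun p => if p.1 = p.2 then ((Real.sqrt d)⁻¹ : ℝ) else 0

/-- The fully entangled fraction: the supremum over `d × d` unitaries `V` of
`⟨ψ⁺| (I ⊗ V)† ρ (I ⊗ V) |ψ⁺⟩`. -/
noncomputable def fef (d : ℕ) (ρ : Matrix (Fin d × Fin d) (Fin d × Fin d) ℂ) : ℝ :=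
  ⨆ V : Matrix.unitaryGroup (Fin d) ℂ,
    (star (psiPlus d) ⬝ᵥ
      ((((1 : Matrix (Fin d) (Fin d) ℂ) ⊗ₖ (V : Matrix (Fin d) (Fin d) ℂ))ᴴ * ρ *
        ((1 : Matrix (Fin d) (Fin d) ℂ) ⊗ₖ (V : Matrix (Fin d) (Fin d) ℂ))) *ᵥ psiPlus d)).re

/-- A density matrix: positive semidefinite with unit trace. -/
def IsDensityMatrix {n : Type*} [Fintype n] (ρ : Matrix n n ℂ) : Prop :=
  ρ.PosSemidef ∧ ρ.trace = 1

/-- `ρ` has absolute fully entangled fraction: `F(UρU†) ≤ 1/d` for every unitary `U`. -/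
def AbsFEF (d : ℕ) (ρ : Matrix (Fin d × Fin d) (Fin d × Fin d) ℂ) : Prop :=
  ∀ U ∈ Matrix.unitaryGroup (Fin d × Fin d) ℂ, fef d (U * ρ * Uᴴ) ≤ 1 / d

/-- Basis vector `|ij⟩` of `ℂ^d ⊗ ℂ^d`. -/
def ket (d : ℕ) (i j : Fin d) : (Fin d × Fin d) → ℂ :=
  fun p => if p = (i, j) then 1 else 0

/-- Rank-one projector `|v⟩⟨v|`. -/
def proj {n : Type*} (v : n → ℂ) : Matrix n n ℂ :=
  Matrix.vecMulVec v (star v)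

/-- Matrix unit `|ab⟩⟨cd|` on `ℂ² ⊗ ℂ²`. -/
def E2 (a b c d : Fin 2) : Matrix (Fin 2 × Fin 2) (Fin 2 × Fin 2) ℂ :=
  Matrix.single (a, b) (c, d) 1

/-- The two-qubit marginal of `p|GHZ⟩⟨GHZ| + (1−p)|W⟩⟨W|`. -/
noncomputable def ghzWred (p : ℝ) : Matrix (Fin 2 × Fin 2) (Fin 2 × Fin 2) ℂ :=
  (((2 + p)/6 : ℝ) : ℂ) • E2 0 0 0 0 + (((1 - p)/3 : ℝ) : ℂ) • E2 0 1 0 1 +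
    (((1 - p)/3 : ℝ) : ℂ) • E2 1 0 1 0 + ((p/2 : ℝ) : ℂ) • E2 1 1 1 1 +
    (((1 - p)/3 : ℝ) : ℂ) • E2 0 1 1 0 + (((1 - p)/3 : ℝ) : ℂ) • E2 1 0 0 1

section Aux

open Polynomial

lemma aux_charpoly_diagonal {n : Type*} [Fintype n] [DecidableEq n] (d : n → ℂ) :
    (Matrix.diagonal d).charpoly = ∏ i, (X - C (d i)) := by
  have : charmatrix (Matrix.diagonal d) = Matrix.diagonal (fun i => X - C (d i)) := by
    ext i j
    by_cases h : i = j
    · subst h; simp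
    · simp [charmatrix_apply_ne _ _ _ h, Matrix.diagonal_apply_ne _ h]
  rw [Matrix.charpoly, this, Matrix.det_diagonal]

lemma aux_charpoly_conj {n : Type*} [Fintype n] [DecidableEq n]
    (U : Matrix.unitaryGroup n ℂ) (D : Matrix n n ℂ) :
    ((U : Matrix n n ℂ) * D * star (U : Matrix n n ℂ)).charpoly = D.charpoly := by
  have hcm : charmatrix ((U : Matrix n n ℂ) * D * star (U : Matrix n n ℂ)) =
      ((U : Matrix n n ℂ).map C) * charmatrix D * ((star (U : Matrix n n ℂ)).map C) := by
    unfold charmatrix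
    rw [Matrix.mul_sub, Matrix.sub_mul]
    congr 1
    · have hc := (Matrix.scalar_commute (n := n) (X : ℂ[X])
        (fun r => Commute.all _ r) (((U : Matrix n n ℂ)).map C)).eq
      rw [← hc, mul_assoc, ← Matrix.map_mul]
      have : (U : Matrix n n ℂ) * (star (U : Matrix n n ℂ)) = 1 := by
        simpa using U.2.2
      rw [this]
      simp
    · simp [Matrix.map_mul]
  rw [Matrix.charpoly, hcm, Matrix.det_mul, Matrix.det_mul, Matrix.charpoly]
  rw [mul_comm, ← mul_assoc, ← Matrix.det_mul, ← Matrix.map_mul]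
  have : (star (U : Matrix n n ℂ)) * (U : Matrix n n ℂ) = 1 := by
    simpa using U.2.1
  rw [this]
  simp

noncomputable def eQ : (Fin 2 × Fin 2) ≃ Fin 4 := finProdFinEquiv.trans (finCongr (by norm_num))

lemma aux_ghzWred_charpoly (p : ℝ) :
    (ghzWred p).charpoly =
      (X - C ((0:ℝ):ℂ)) * (X - C (((2/3)*(1-p):ℝ):ℂ)) * (X - C ((p/2:ℝ):ℂ)) *
        (X - C (((2+p)/6:ℝ):ℂ)) := by
  have h0 : eQ.symm 0 = (0, 0) := rfl
  have h1 : eQ.symm 1 = (0, 1) := rfl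
  have h2 : eQ.symm 2 = (1, 0) := rfl
  have h3 : eQ.symm 3 = (1, 1) := rfl
  rw [Matrix.charpoly, ← Matrix.det_reindex_self eQ (charmatrix (ghzWred p)),
    Matrix.det_succ_row_zero]
  set_option maxHeartbeats 1000000 in
  simp only [Fin.sum_univ_four, Matrix.det_fin_three, Matrix.submatrix_apply,
    Matrix.reindex_apply, Fin.succAbove, Fin.succ]
  norm_num
  simp only [Matrix.submatrix_apply, h0, h1, h2, h3]
  simp only [charmatrix_apply, Matrix.diagonal_apply, ghzWred, E2, Matrix.add_apply,
    Matrix.smul_apply, Matrix.single, Matrix.of_apply, Prod.mk.injEq, smul_eq_mul,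
    mul_ite, mul_one, mul_zero]
  norm_num
  push_cast
  simp only [h0, h1, h2, h3, Prod.mk.injEq]
  norm_num [Prod.ext_iff, Prod.fst_one, Prod.snd_one, Prod.fst_zero, Prod.snd_zero, Fin.ext_iff]
  apply Polynomial.funext
  intro x
  simp only [Polynomial.eval_mul, Polynomial.eval_sub, Polynomial.eval_add, Polynomial.eval_X,
    Polynomial.eval_C, Polynomial.eval_one, Polynomial.eval_zero]
  push_cast
  ring

lemma aux_psiPlus_norm : star (psiPlus 2) ⬝ᵥ psiPlus 2 = 1 := by
  have h2 : ((Real.sqrt 2 : ℝ) : ℂ)⁻¹ * ((Real.sqrt 2 : ℝ) : ℂ)⁻¹ = 1/2 := by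
    rw [← mul_inv]
    norm_cast
    rw [Real.mul_self_sqrt (by norm_num : (0:ℝ) ≤ 2)]
    norm_num
  simp only [dotProduct, Fintype.sum_prod_type, Fin.sum_univ_two, psiPlus, Pi.star_apply]
  norm_num
  rw [h2]
  norm_num

lemma aux_kron_conjTranspose {n : Type*} [Fintype n] (A B : Matrix n n ℂ) :
    (A ⊗ₖ B)ᴴ = Aᴴ ⊗ₖ Bᴴ := by
  ext ⟨i, j⟩ ⟨k, l⟩
  simp [Matrix.conjTranspose_apply, Matrix.kroneckerMap_apply, star_mul']

lemma aux_kron_unitary {n : Type*} [Fintype n] [DecidableEq n]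
    (V : Matrix.unitaryGroup n ℂ) :
    (1 : Matrix n n ℂ) ⊗ₖ (V : Matrix n n ℂ) ∈ Matrix.unitaryGroup (n × n) ℂ := by
  rw [Matrix.mem_unitaryGroup_iff']
  rw [Matrix.star_eq_conjTranspose, aux_kron_conjTranspose, ← Matrix.mul_kronecker_mul]
  have hV : (V : Matrix n n ℂ)ᴴ * (V : Matrix n n ℂ) = 1 := by
    have := V.2.1
    rwa [Matrix.star_eq_conjTranspose] at this
  rw [hV]
  simp [Matrix.one_kronecker_one]

lemma aux_term_rewrite {n : Type*} [Fintype n] (M A : Matrix n n ℂ) (v : n → ℂ) :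
    star v ⬝ᵥ ((Aᴴ * M * A) *ᵥ v) = star (A *ᵥ v) ⬝ᵥ (M *ᵥ (A *ᵥ v)) := by
  rw [Matrix.star_mulVec, Matrix.mulVec_mulVec, Matrix.dotProduct_mulVec,
    Matrix.dotProduct_mulVec, Matrix.vecMul_vecMul, mul_assoc]

lemma aux_norm_preserved {n : Type*} [Fintype n] [DecidableEq n]
    (A : Matrix n n ℂ) (hA : A ∈ Matrix.unitaryGroup n ℂ) (v : n → ℂ) :
    star (A *ᵥ v) ⬝ᵥ (A *ᵥ v) = star v ⬝ᵥ v := by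
  rw [Matrix.star_mulVec, Matrix.dotProduct_mulVec, Matrix.vecMul_vecMul]
  rw [Matrix.mem_unitaryGroup_iff', Matrix.star_eq_conjTranspose] at hA
  rw [hA]
  simp

lemma aux_quad_bound {n : Type*} [Fintype n] [DecidableEq n]
    (M : Matrix n n ℂ) (c : ℝ)
    (h : (((c : ℂ) • (1 : Matrix n n ℂ)) - M).PosSemidef)
    (w : n → ℂ) (hw : star w ⬝ᵥ w = 1) :
    (star w ⬝ᵥ (M *ᵥ w)).re ≤ c := by
  have h2 := h.dotProduct_mulVec_nonneg w
  rw [Matrix.sub_mulVec, dotProduct_sub, Matrix.smul_mulVec,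
    Matrix.one_mulVec, dotProduct_smul, hw] at h2
  rw [Complex.le_def] at h2
  simp only [Complex.zero_re, Complex.sub_re, Complex.zero_im, Complex.sub_im,
    smul_eq_mul, mul_one] at h2
  have := h2.1
  simp only [Complex.ofReal_re] at this
  linarith

end Aux

lemma aux_psd (p c : ℝ) (hH : (ghzWred p).IsHermitian)
    (h1 : (2+p)/6 ≤ c) (h2 : p/2 ≤ c) (h3 : 2*((1-p)/3) ≤ c) (h4 : 0 ≤ 1-p) :
    (((c:ℂ) • (1 : Matrix (Fin 2 × Fin 2) (Fin 2 × Fin 2) ℂ)) - ghzWred p).PosSemidef := by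
  refine Matrix.PosSemidef.of_dotProduct_mulVec_nonneg ?_ ?_
  · have h : ((c:ℂ) • (1 : Matrix (Fin 2 × Fin 2) (Fin 2 × Fin 2) ℂ) - ghzWred p)ᴴ =
        (c:ℂ) • (1 : Matrix (Fin 2 × Fin 2) (Fin 2 × Fin 2) ℂ) - (ghzWred p)ᴴ := by
      rw [Matrix.conjTranspose_sub, Matrix.conjTranspose_smul]
      simp [Complex.conj_ofReal]
    rw [Matrix.IsHermitian, h, hH]
  · intro x
    simp only [dotProduct, Matrix.mulVec, Fintype.sum_prod_type, Fin.sum_univ_two,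
      ghzWred, E2, Matrix.single, Matrix.sub_apply, Matrix.smul_apply,
      Matrix.one_apply, Matrix.add_apply, Matrix.of_apply, Prod.mk.injEq, Pi.star_apply,
      smul_eq_mul]
    norm_num [Prod.ext_iff, Fin.ext_iff]
    have e1 : ((c:ℂ) - (2+(p:ℂ))/6) = ((c - (2+p)/6 : ℝ) : ℂ) := by push_cast; ring
    have e2 : ((c:ℂ) - (1-(p:ℂ))/3) = ((c - (1-p)/3 : ℝ) : ℂ) := by push_cast; ring
    have e3 : ((1:ℂ) - (p:ℂ))/3 = (((1-p)/3 : ℝ) : ℂ) := by push_cast; ring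
    have e4 : ((c:ℂ) - (p:ℂ)/2) = ((c - p/2 : ℝ) : ℂ) := by push_cast; ring
    rw [e1, e2, e3, e4, Complex.le_def]
    have hu : (0:ℝ) ≤ (1-p)/3 := by linarith
    constructor
    · simp only [Complex.add_re, Complex.add_im, Complex.sub_re, Complex.sub_im, Complex.neg_re,
        Complex.neg_im, Complex.mul_re, Complex.mul_im, Complex.ofReal_re, Complex.ofReal_im,
        Complex.conj_re, Complex.conj_im, Complex.zero_re, Complex.zero_im]
      nlinarith [mul_nonneg (by linarith : (0:ℝ) ≤ c - (2+p)/6)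
          (add_nonneg (sq_nonneg (x (0,0)).re) (sq_nonneg (x (0,0)).im)),
        mul_nonneg (by linarith : (0:ℝ) ≤ c - p/2)
          (add_nonneg (sq_nonneg (x (1,1)).re) (sq_nonneg (x (1,1)).im)),
        mul_nonneg (by linarith : (0:ℝ) ≤ c - 2*((1-p)/3))
          (add_nonneg (add_nonneg (sq_nonneg (x (0,1)).re) (sq_nonneg (x (0,1)).im))
            (add_nonneg (sq_nonneg (x (1,0)).re) (sq_nonneg (x (1,0)).im))),
        mul_nonneg hu (sq_nonneg ((x (0,1)).re - (x (1,0)).re)),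
        mul_nonneg hu (sq_nonneg ((x (0,1)).im - (x (1,0)).im))]
    · simp only [Complex.add_re, Complex.add_im, Complex.sub_re, Complex.sub_im, Complex.neg_re,
        Complex.neg_im, Complex.mul_re, Complex.mul_im, Complex.ofReal_re, Complex.ofReal_im,
        Complex.conj_re, Complex.conj_im, Complex.zero_re, Complex.zero_im]
      ring

lemma aux_term_le (p c : ℝ)
    (hpsd : (((c:ℂ) • (1 : Matrix (Fin 2 × Fin 2) (Fin 2 × Fin 2) ℂ)) - ghzWred p).PosSemidef)
    (A : Matrix (Fin 2 × Fin 2) (Fin 2 × Fin 2) ℂ)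
    (hA : A ∈ Matrix.unitaryGroup (Fin 2 × Fin 2) ℂ) :
    (star (psiPlus 2) ⬝ᵥ ((Aᴴ * ghzWred p * A) *ᵥ psiPlus 2)).re ≤ c := by
  rw [aux_term_rewrite]
  exact aux_quad_bound _ c hpsd _ (by rw [aux_norm_preserved _ hA _]; exact aux_psiPlus_norm)

lemma aux_fef_le (p c : ℝ)
    (hpsd : (((c:ℂ) • (1 : Matrix (Fin 2 × Fin 2) (Fin 2 × Fin 2) ℂ)) - ghzWred p).PosSemidef)
    (U : Matrix (Fin 2 × Fin 2) (Fin 2 × Fin 2) ℂ)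
    (hU : U ∈ Matrix.unitaryGroup (Fin 2 × Fin 2) ℂ) :
    fef 2 (U * ghzWred p * Uᴴ) ≤ c := by
  apply ciSup_le
  intro V
  have key : ((1 : Matrix (Fin 2) (Fin 2) ℂ) ⊗ₖ (V : Matrix (Fin 2) (Fin 2) ℂ))ᴴ *
        (U * ghzWred p * Uᴴ) * ((1 : Matrix (Fin 2) (Fin 2) ℂ) ⊗ₖ (V : Matrix (Fin 2) (Fin 2) ℂ)) =
      (Uᴴ * ((1 : Matrix (Fin 2) (Fin 2) ℂ) ⊗ₖ (V : Matrix (Fin 2) (Fin 2) ℂ)))ᴴ * ghzWred p *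
        (Uᴴ * ((1 : Matrix (Fin 2) (Fin 2) ℂ) ⊗ₖ (V : Matrix (Fin 2) (Fin 2) ℂ))) := by
    rw [Matrix.conjTranspose_mul, Matrix.conjTranspose_conjTranspose]
    simp only [Matrix.mul_assoc]
  rw [key]
  refine aux_term_le p c hpsd _ (mul_mem ?_ (aux_kron_unitary V))
  rw [← Matrix.star_eq_conjTranspose]
  exact Unitary.star_mem hU

lemma aux_S_unitary : (!![0,1;1,0] : Matrix (Fin 2) (Fin 2) ℂ) ∈ Matrix.unitaryGroup (Fin 2) ℂ := by
  rw [Matrix.mem_unitaryGroup_iff']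
  ext i j
  fin_cases i <;> fin_cases j <;>
    simp [Matrix.mul_apply, Fin.sum_univ_two, Matrix.one_apply]

lemma aux_w_eval :
    (((1 : Matrix (Fin 2) (Fin 2) ℂ) ⊗ₖ (!![0,1;1,0] : Matrix (Fin 2) (Fin 2) ℂ))ᴴ *ᵥ psiPlus 2) =
      fun q => if q = ((0 : Fin 2), (1 : Fin 2)) ∨ q = ((1 : Fin 2), (0 : Fin 2))
        then (((Real.sqrt 2)⁻¹ : ℝ) : ℂ) else 0 := by
  ext ⟨i, j⟩
  fin_cases i <;> fin_cases j <;>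
    simp [Matrix.mulVec, dotProduct, Fintype.sum_prod_type, Fin.sum_univ_two, psiPlus,
      Matrix.conjTranspose_apply, Matrix.kroneckerMap_apply, Matrix.one_apply, Prod.ext_iff]

lemma aux_term_val (p : ℝ) :
    (star (psiPlus 2) ⬝ᵥ
      ((((1 : Matrix (Fin 2) (Fin 2) ℂ) ⊗ₖ (!![0,1;1,0] : Matrix (Fin 2) (Fin 2) ℂ)) * ghzWred p *
        ((1 : Matrix (Fin 2) (Fin 2) ℂ) ⊗ₖ (!![0,1;1,0] : Matrix (Fin 2) (Fin 2) ℂ))ᴴ) *ᵥ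
          psiPlus 2)).re = 2 * ((1 - p)/3) := by
  have hA : ((1 : Matrix (Fin 2) (Fin 2) ℂ) ⊗ₖ (!![0,1;1,0] : Matrix (Fin 2) (Fin 2) ℂ)) * ghzWred p *
      ((1 : Matrix (Fin 2) (Fin 2) ℂ) ⊗ₖ (!![0,1;1,0] : Matrix (Fin 2) (Fin 2) ℂ))ᴴ =
      (((1 : Matrix (Fin 2) (Fin 2) ℂ) ⊗ₖ (!![0,1;1,0] : Matrix (Fin 2) (Fin 2) ℂ))ᴴ)ᴴ * ghzWred p *
      ((1 : Matrix (Fin 2) (Fin 2) ℂ) ⊗ₖ (!![0,1;1,0] : Matrix (Fin 2) (Fin 2) ℂ))ᴴ := by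
    rw [Matrix.conjTranspose_conjTranspose]
  rw [hA, aux_term_rewrite, aux_w_eval]
  simp only [dotProduct, Matrix.mulVec, Fintype.sum_prod_type, Fin.sum_univ_two,
    ghzWred, E2, Matrix.single, Matrix.add_apply, Matrix.smul_apply, Matrix.of_apply,
    Prod.mk.injEq, Pi.star_apply, smul_eq_mul]
  norm_num [Prod.ext_iff, Fin.ext_iff]
  have h2' : Real.sqrt 2 * Real.sqrt 2 = 2 := Real.mul_self_sqrt (by norm_num)
  linear_combination ((1 - p)/3) * h2'

theorem ghzWred_absFEF_iff (p : ℝ) (hp0 : 0 ≤ p) (hp1 : p ≤ 1)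
    (hH : (ghzWred p).IsHermitian) :
    (Finset.univ.val.map hH.eigenvalues : Multiset ℝ) =
      {0, (2/3)*(1 - p), p/2, (2 + p)/6} ∧
    (AbsFEF 2 (ghzWred p) ↔ (1/4 ≤ p ∧ p ≤ 1)) := by
  constructor
  · have hcp : (ghzWred p).charpoly =
        ∏ i : Fin 2 × Fin 2, (Polynomial.X - Polynomial.C ((hH.eigenvalues i : ℝ) : ℂ)) := by
      conv_lhs => rw [hH.spectral_theorem, Unitary.conjStarAlgAut_apply]
      rw [aux_charpoly_conj hH.eigenvectorUnitary, aux_charpoly_diagonal]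
      rfl
    have h2 : (ghzWred p).charpoly =
        (Multiset.map (fun a : ℂ => Polynomial.X - Polynomial.C a)
          ((Finset.univ.val.map hH.eigenvalues).map (fun r : ℝ => (r : ℂ)))).prod := by
      rw [hcp, Finset.prod_eq_multiset_prod, Multiset.map_map, Multiset.map_map]
      rfl
    have h3 : (ghzWred p).charpoly =
        (Multiset.map (fun a : ℂ => Polynomial.X - Polynomial.C a)
          (({0, (2/3)*(1 - p), p/2, (2 + p)/6} : Multiset ℝ).map (fun r : ℝ => (r : ℂ)))).prod := by
      rw [aux_ghzWred_charpoly]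
      simp only [Multiset.insert_eq_cons, Multiset.map_cons, Multiset.map_singleton,
        Multiset.prod_cons, Multiset.prod_singleton]
      ring
    have h4 := congrArg Polynomial.roots (h2.symm.trans h3)
    rw [Polynomial.roots_multiset_prod_X_sub_C, Polynomial.roots_multiset_prod_X_sub_C] at h4
    exact Multiset.map_injective Complex.ofReal_injective h4
  · constructor
    · intro habs
      refine ⟨?_, hp1⟩
      set U : Matrix (Fin 2 × Fin 2) (Fin 2 × Fin 2) ℂ :=
        (1 : Matrix (Fin 2) (Fin 2) ℂ) ⊗ₖ (!![0,1;1,0] : Matrix (Fin 2) (Fin 2) ℂ) with hUdef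
      have hU : U ∈ Matrix.unitaryGroup (Fin 2 × Fin 2) ℂ :=
        aux_kron_unitary ⟨_, aux_S_unitary⟩
      have hb := habs U hU
      have hpsd1 := aux_psd p 1 hH (by linarith) (by linarith) (by linarith) (by linarith)
      have hbdd : BddAbove (Set.range fun V : Matrix.unitaryGroup (Fin 2) ℂ =>
          (star (psiPlus 2) ⬝ᵥ
            ((((1 : Matrix (Fin 2) (Fin 2) ℂ) ⊗ₖ (V : Matrix (Fin 2) (Fin 2) ℂ))ᴴ *
              (U * ghzWred p * Uᴴ) *
              ((1 : Matrix (Fin 2) (Fin 2) ℂ) ⊗ₖ (V : Matrix (Fin 2) (Fin 2) ℂ))) *ᵥ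
                psiPlus 2)).re) := by
        refine ⟨1, ?_⟩
        rintro x ⟨V, rfl⟩
        dsimp only
        have key : ((1 : Matrix (Fin 2) (Fin 2) ℂ) ⊗ₖ (V : Matrix (Fin 2) (Fin 2) ℂ))ᴴ *
              (U * ghzWred p * Uᴴ) *
              ((1 : Matrix (Fin 2) (Fin 2) ℂ) ⊗ₖ (V : Matrix (Fin 2) (Fin 2) ℂ)) =
            (Uᴴ * ((1 : Matrix (Fin 2) (Fin 2) ℂ) ⊗ₖ (V : Matrix (Fin 2) (Fin 2) ℂ)))ᴴ *
              ghzWred p *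
              (Uᴴ * ((1 : Matrix (Fin 2) (Fin 2) ℂ) ⊗ₖ (V : Matrix (Fin 2) (Fin 2) ℂ))) := by
          rw [Matrix.conjTranspose_mul, Matrix.conjTranspose_conjTranspose]
          simp only [Matrix.mul_assoc]
        rw [key]
        refine aux_term_le p 1 hpsd1 _ (mul_mem ?_ (aux_kron_unitary V))
        rw [← Matrix.star_eq_conjTranspose]
        exact Unitary.star_mem hU
      have hle : 2 * ((1 - p)/3) ≤ fef 2 (U * ghzWred p * Uᴴ) := by
        have hval : (star (psiPlus 2) ⬝ᵥ
            ((((1 : Matrix (Fin 2) (Fin 2) ℂ) ⊗ₖ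
                (((1 : Matrix.unitaryGroup (Fin 2) ℂ) : Matrix (Fin 2) (Fin 2) ℂ)))ᴴ *
              (U * ghzWred p * Uᴴ) *
              ((1 : Matrix (Fin 2) (Fin 2) ℂ) ⊗ₖ
                (((1 : Matrix.unitaryGroup (Fin 2) ℂ) : Matrix (Fin 2) (Fin 2) ℂ)))) *ᵥ
                  psiPlus 2)).re = 2 * ((1 - p)/3) := by
          rw [show (((1 : Matrix.unitaryGroup (Fin 2) ℂ) : Matrix (Fin 2) (Fin 2) ℂ)) =
            (1 : Matrix (Fin 2) (Fin 2) ℂ) from rfl]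
          rw [Matrix.one_kronecker_one, Matrix.conjTranspose_one, Matrix.one_mul,
            Matrix.mul_one]
          exact aux_term_val p
        rw [← hval]
        exact le_ciSup hbdd (1 : Matrix.unitaryGroup (Fin 2) ℂ)
      have : (2:ℝ) * ((1 - p)/3) ≤ 1/2 := by
        refine le_trans hle (le_trans hb ?_)
        norm_num
      linarith
    · rintro ⟨h14, _⟩ U hU
      have hpsd := aux_psd p (1/2) hH (by linarith) (by linarith) (by linarith) (by linarith)
      refine le_trans (aux_fef_le p (1/2) hpsd U hU) ?_
      norm_num
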